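/- If D is a sharp domain, then D is a pseudo-Dedekind domain, i.e., the v-closure of every nonzero ideal of D is invertible. -/

import Mathlib

/-- A domain `R` is *sharp* if whenever `I ⊇ A*B` with `I, A, B` nonzero ideals,
there exist ideals `A' ⊇ A` and `B' ⊇ B` such that `I = A'*B'`. -/
def IsSharpDomain (R : Type*) [CommRing R] : Prop :=
  ∀ I A B : Ideal R, I ≠ ⊥ → A ≠ ⊥ → B ≠ ⊥ → A * B ≤ I →
    ∃ A' B' : Ideal R, A ≤ A' ∧ B ≤ B' ∧ I = A' * B'

/-- A domain is *pseudo-Dedekind* if the `v`-closure `(I⁻¹)⁻¹` of every nonzero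
ideal `I` is invertible (as a fractional ideal). -/
def IsPseudoDedekind (R : Type*) [CommRing R] [IsDomain R] : Prop :=
  ∀ I : Ideal R, I ≠ ⊥ →
    IsUnit (((I : FractionalIdeal (nonZeroDivisors R) (FractionRing R))⁻¹)⁻¹)

theorem sharp_isPseudoDedekind (R : Type*) [CommRing R] [IsDomain R]
    (h : IsSharpDomain R) : IsPseudoDedekind R := by
  intro I hI
  set K := FractionRing R
  set J : FractionalIdeal (nonZeroDivisors R) K := (I : FractionalIdeal (nonZeroDivisors R) K)
    with hJdef
  have hJ : J ≠ 0 := by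
    rw [hJdef, FractionalIdeal.coeIdeal_ne_zero]
    exact hI
  -- pick a nonzero element a ∈ I
  obtain ⟨a, haI, ha⟩ := Submodule.exists_mem_ne_zero_of_ne_bot hI
  have haK : algebraMap R K a ≠ 0 :=
    (map_ne_zero_iff _ (IsFractionRing.injective R K)).mpr ha
  set sa : FractionalIdeal (nonZeroDivisors R) K :=
    FractionalIdeal.spanSingleton _ (algebraMap R K a) with hsadef
  have hsa : sa ≠ 0 := by
    rw [hsadef, Ne, FractionalIdeal.spanSingleton_eq_zero_iff]
    exact haK
  have hsaJ : sa ≤ J := by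
    rw [hsadef, hJdef, FractionalIdeal.spanSingleton_le_iff_mem]
    exact FractionalIdeal.mem_coeIdeal_of_mem _ haI
  -- 1 ≤ J⁻¹ since J ≤ 1
  have hJinv_ne : (1 : FractionalIdeal (nonZeroDivisors R) K) ≤ J⁻¹ := by
    have := FractionalIdeal.inv_anti_mono (I := J)
      (J := (1 : FractionalIdeal (nonZeroDivisors R) K)) hJ one_ne_zero
      FractionalIdeal.coeIdeal_le_one
    simpa [FractionalIdeal.inv_eq] using this
  have hJinv0 : J⁻¹ ≠ 0 := fun h0 => by
    rw [h0] at hJinv_ne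
    exact one_ne_zero (FractionalIdeal.le_zero_iff.mp hJinv_ne)
  -- sa * J⁻¹ is an integral ideal B
  have hle1 : sa * J⁻¹ ≤ 1 := by
    calc sa * J⁻¹ ≤ J * J⁻¹ := mul_le_mul' hsaJ le_rfl
    _ ≤ 1 := by rw [FractionalIdeal.inv_eq]; exact FractionalIdeal.mul_one_div_le_one
  obtain ⟨B, hB⟩ := FractionalIdeal.le_one_iff_exists_coeIdeal.mp hle1
  have hBne : B ≠ ⊥ := by
    rw [← FractionalIdeal.coeIdeal_ne_zero (K := K), hB]
    intro h0
    have hle : sa ≤ 0 := by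
      calc sa = sa * 1 := (mul_one _).symm
      _ ≤ sa * J⁻¹ := mul_le_mul' le_rfl hJinv_ne
      _ = 0 := h0
    exact hsa (le_antisymm hle (FractionalIdeal.zero_le _))
  -- I * B ≤ (a)
  have hspan_ne : Ideal.span {a} ≠ ⊥ := by
    simpa [Ideal.span_singleton_eq_bot] using ha
  have hcoe_span : ((Ideal.span {a} : Ideal R) : FractionalIdeal (nonZeroDivisors R) K) = sa := by
    rw [hsadef, FractionalIdeal.coeIdeal_span_singleton]
  have hIB : I * B ≤ Ideal.span {a} := by
    rw [← FractionalIdeal.coeIdeal_le_coeIdeal K, FractionalIdeal.coeIdeal_mul, hB, hcoe_span,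
      ← hJdef, ← mul_assoc, mul_comm J sa, mul_assoc]
    calc sa * (J * J⁻¹) ≤ sa * 1 := by
          refine mul_le_mul' le_rfl ?_
          rw [FractionalIdeal.inv_eq]
          exact FractionalIdeal.mul_one_div_le_one
      _ = sa := mul_one _
  -- apply sharpness
  obtain ⟨A', B', hIA', hBB', heq⟩ := h (Ideal.span {a}) I B hspan_ne hI hBne hIB
  set Af : FractionalIdeal (nonZeroDivisors R) K := (A' : FractionalIdeal (nonZeroDivisors R) K)
    with hAfdef
  set Bf : FractionalIdeal (nonZeroDivisors R) K := (B' : FractionalIdeal (nonZeroDivisors R) K)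
    with hBfdef
  have hprod : Af * Bf = sa := by
    rw [hAfdef, hBfdef, ← FractionalIdeal.coeIdeal_mul, ← heq, hcoe_span]
  -- Af is a unit
  have hsa_unit : sa * sa⁻¹ = 1 := FractionalIdeal.spanSingleton_mul_inv K haK
  have hAf_unit : IsUnit Af := by
    refine IsUnit.of_mul_eq_one (Bf * sa⁻¹) ?_
    rw [← mul_assoc, hprod, hsa_unit]
  have hAf_inv : Af * Af⁻¹ = 1 := (FractionalIdeal.mul_inv_cancel_iff_isUnit K).mpr hAf_unit
  have hAf0 : Af ≠ 0 := fun h0 => by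
    rw [h0, zero_mul] at hAf_inv
    exact zero_ne_one hAf_inv
  -- Af⁻¹ = J⁻¹
  have hJAf : J ≤ Af := by
    rw [hJdef, hAfdef]
    exact (FractionalIdeal.coeIdeal_le_coeIdeal K).mpr hIA'
  have h1 : Af⁻¹ ≤ J⁻¹ := FractionalIdeal.inv_anti_mono hJ hAf0 hJAf
  have hBf_eq : Bf = Af⁻¹ * sa := by
    have : Af⁻¹ * (Af * Bf) = Af⁻¹ * sa := by rw [hprod]
    rwa [← mul_assoc, mul_comm Af⁻¹ Af, hAf_inv, one_mul] at this
  have h2 : J⁻¹ ≤ Af⁻¹ := by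
    have hBle : (B : FractionalIdeal (nonZeroDivisors R) K) ≤ Bf :=
      (FractionalIdeal.coeIdeal_le_coeIdeal K).mpr hBB'
    rw [hB] at hBle
    have := mul_le_mul' (le_refl sa⁻¹) hBle
    rwa [← mul_assoc, mul_comm sa⁻¹ sa, hsa_unit, one_mul, hBf_eq, ← mul_assoc,
      mul_comm sa⁻¹ Af⁻¹, mul_assoc, mul_comm sa⁻¹ sa, hsa_unit, mul_one] at this
  have hinv_eq : J⁻¹ = Af⁻¹ := le_antisymm h2 h1
  -- conclude
  have hIIinv : (J⁻¹)⁻¹ = Af := by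
    rw [hinv_eq]
    exact (FractionalIdeal.right_inverse_eq K Af⁻¹ Af (by rw [mul_comm]; exact hAf_inv)).symm
  rw [hIIinv]
  exact hAf_unit
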